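/- Let 1 < p < ∞, 0 < α < n/p. There is a constant C = C(n, α, p) such that for every dyadic cube R, every locally finite measure ω supported in R, and s = min(1, p−1): (1/|R|) ∫_R (W_{α,p}ω)^s dx ≤ C ( ω(R)/|R|^{1−αp/n} )^{s/(p−1)}. -/

import Mathlib

open MeasureTheory Set
open scoped ENNReal

/-- A dyadic cube in `ℝⁿ`, given by a generation `k : ℤ` and a corner index `m : Fin n → ℤ`. -/
structure DyadicCube (n : ℕ) where
  k : ℤ
  m : Fin n → ℤ

/-- The set of points of a dyadic cube: `∏ᵢ [mᵢ 2^{-k}, (mᵢ+1) 2^{-k})`. -/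
def DyadicCube.toSet {n : ℕ} (Q : DyadicCube n) : Set (EuclideanSpace ℝ (Fin n)) :=
  {x | ∀ i, (Q.m i : ℝ) * (2 : ℝ) ^ (-Q.k) ≤ x i ∧ x i < ((Q.m i : ℝ) + 1) * (2 : ℝ) ^ (-Q.k)}

/-- The Wolff potential `W_{α,p}ω(x) = ∫₀^∞ (ω(B(x,ρ))/ρ^{n-αp})^{1/(p-1)} dρ/ρ`. -/
noncomputable def wolffPotential (n : ℕ) (α p : ℝ)
    (ω : Measure (EuclideanSpace ℝ (Fin n))) (x : EuclideanSpace ℝ (Fin n)) : ℝ≥0∞ :=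
  ∫⁻ ρ in Set.Ioi (0 : ℝ),
    (ω (Metric.ball x ρ) / ENNReal.ofReal (ρ ^ ((n : ℝ) - α * p))) ^ (1 / (p - 1)) *
      ENNReal.ofReal (1 / ρ)


/-- helper: product of `ofReal` rpow's with same base. -/
lemma ofReal_rpow_mul_ofReal_rpow {ρ : ℝ} (hρ : 0 < ρ) (a b : ℝ) :
    ENNReal.ofReal (ρ ^ a) * ENNReal.ofReal (ρ ^ b) = ENNReal.ofReal (ρ ^ (a + b)) := by
  rw [← ENNReal.ofReal_mul (Real.rpow_nonneg hρ.le a), ← Real.rpow_add hρ]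

lemma ofReal_rpow_inv' {ρ : ℝ} (hρ : 0 < ρ) (a : ℝ) :
    (ENNReal.ofReal (ρ ^ a))⁻¹ = ENNReal.ofReal (ρ ^ (-a)) := by
  rw [← ENNReal.ofReal_inv_of_pos (Real.rpow_pos_of_pos hρ a), ← Real.rpow_neg hρ.le]

lemma ofReal_rpow_rpow {ρ : ℝ} (hρ : 0 < ρ) (a c : ℝ) :
    ENNReal.ofReal (ρ ^ a) ^ c = ENNReal.ofReal (ρ ^ (a * c)) := by
  rw [ENNReal.ofReal_rpow_of_pos (Real.rpow_pos_of_pos hρ a), ← Real.rpow_mul hρ.le]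

/-- countable subadditivity of `t ↦ t^s` for `s ≤ 1` on `ℝ≥0∞`. -/
lemma tsum_rpow_le' {f : ℕ → ℝ≥0∞} {s : ℝ} (hs0 : 0 < s) (hs1 : s ≤ 1) :
    (∑' i, f i) ^ s ≤ ∑' i, f i ^ s := by
  classical
  have key : ∀ F : Finset ℕ, (∑ i ∈ F, f i) ^ s ≤ ∑ i ∈ F, f i ^ s := by
    intro F
    induction F using Finset.induction_on with
    | empty => simp [ENNReal.zero_rpow_of_pos hs0]
    | insert _ _ h ih =>
      rw [Finset.sum_insert h, Finset.sum_insert h]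
      exact (ENNReal.rpow_add_le_add_rpow _ _ hs0.le hs1).trans (add_le_add_right ih _)
  have h2 : ∀ F : Finset ℕ, ∑ i ∈ F, f i ≤ (∑' i, f i ^ s) ^ (1 / s) := by
    intro F
    have h3 : (∑ i ∈ F, f i) = ((∑ i ∈ F, f i) ^ s) ^ (1 / s) := by
      rw [← ENNReal.rpow_mul, mul_one_div_cancel hs0.ne', ENNReal.rpow_one]
    rw [h3]
    exact ENNReal.rpow_le_rpow ((key F).trans (ENNReal.sum_le_tsum F)) (by positivity)
  calc (∑' i, f i) ^ s ≤ ((∑' i, f i ^ s) ^ (1 / s)) ^ s := by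
        apply ENNReal.rpow_le_rpow _ hs0.le
        rw [ENNReal.tsum_eq_iSup_sum]
        exact iSup_le h2
    _ = ∑' i, f i ^ s := by
        rw [← ENNReal.rpow_mul, one_div_mul_cancel hs0.ne', ENNReal.rpow_one]

/-- Jensen/Hölder: `∫ f^c ≤ (∫ f)^c (μ univ)^{1-c}` for `0 < c < 1`. -/
lemma lintegral_rpow_le_mul {α : Type*} [MeasurableSpace α] (μ : Measure α) {f : α → ℝ≥0∞}
    (hf : Measurable f) {c : ℝ} (hc0 : 0 < c) (hc1 : c < 1) :
    ∫⁻ a, f a ^ c ∂μ ≤ (∫⁻ a, f a ∂μ) ^ c * μ univ ^ (1 - c) := by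
  have hpq : (1 / c).HolderConjugate (1 / (1 - c)) := by
    constructor
    · rw [one_div, one_div, inv_inv, inv_inv, inv_one]; ring
    · positivity
    · have : 0 < 1 - c := by linarith
      positivity
  have h := ENNReal.lintegral_mul_le_Lp_mul_Lq μ hpq
      (f := fun a => f a ^ c) (g := fun _ => 1)
      (hf.pow_const c).aemeasurable aemeasurable_const
  simp only [Pi.mul_apply, mul_one] at h
  refine h.trans (le_of_eq ?_)
  congr 1
  · rw [one_div_one_div]
    congr 1
    refine lintegral_congr fun a => ?_
    rw [← ENNReal.rpow_mul, mul_one_div_cancel hc0.ne', ENNReal.rpow_one]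
  · rw [one_div_one_div]
    congr 1
    simp [lintegral_one]

lemma geo_ne_top {c : ℝ} (hc : 0 < c) :
    (1 - ENNReal.ofReal (((2 : ℝ) ^ c)⁻¹))⁻¹ ≠ ⊤ := by
  rw [ENNReal.inv_ne_top]
  have h1 : (((2 : ℝ) ^ c)⁻¹) < 1 := by
    rw [inv_lt_one_iff₀]
    right
    rw [Real.one_lt_rpow_iff_of_pos (by norm_num)]
    exact Or.inl ⟨one_lt_two, hc⟩
  have : ENNReal.ofReal (((2 : ℝ) ^ c)⁻¹) < 1 := ENNReal.ofReal_lt_one.mpr h1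
  exact (tsub_pos_of_lt this).ne'

lemma geo_sum {L c : ℝ} (hL : 0 < L) (hc : 0 < c) :
    ∑' j : ℕ, ENNReal.ofReal ((L / 2 ^ j) ^ c) =
      ENNReal.ofReal (L ^ c) * (1 - ENNReal.ofReal (((2 : ℝ) ^ c)⁻¹))⁻¹ := by
  have hper : ∀ j : ℕ, ENNReal.ofReal ((L / 2 ^ j) ^ c)
      = ENNReal.ofReal (L ^ c) * (ENNReal.ofReal (((2 : ℝ) ^ c)⁻¹)) ^ j := by
    intro j
    have h2j : (0 : ℝ) < 2 ^ j := by positivity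
    have e1 : (L / 2 ^ j) ^ c = L ^ c * (((2 : ℝ) ^ c)⁻¹) ^ j := by
      rw [Real.div_rpow hL.le h2j.le]
      have e2 : ((2 : ℝ) ^ j) ^ c = ((2 : ℝ) ^ c) ^ j := by
        rw [← Real.rpow_natCast (2 : ℝ) j, ← Real.rpow_mul (by norm_num),
          mul_comm, Real.rpow_mul (by norm_num), Real.rpow_natCast]
      rw [e2, div_eq_mul_inv, inv_pow]
    rw [e1, ENNReal.ofReal_mul (Real.rpow_nonneg hL.le c), ENNReal.ofReal_pow (by positivity)]
  rw [tsum_congr hper, ENNReal.tsum_mul_left, ENNReal.tsum_geometric]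

/-- tail integral of a power. -/
lemma lintegral_Ioi_rpow_ofReal {e L : ℝ} (he : e < -1) (hL : 0 < L) :
    ∫⁻ ρ in Ioi L, ENNReal.ofReal (ρ ^ e) = ENNReal.ofReal (-L ^ (e + 1) / (e + 1)) := by
  rw [← integral_Ioi_rpow_of_lt he hL]
  rw [MeasureTheory.ofReal_integral_eq_lintegral_ofReal (integrableOn_Ioi_rpow_of_lt he hL)]
  filter_upwards [ae_restrict_mem measurableSet_Ioi] with ρ hρ
  exact Real.rpow_nonneg (le_of_lt (hL.trans hρ)) e

/-- covering of `Ioc 0 L` by dyadic pieces. -/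
lemma Ioc_subset_iUnion_dyadic {L : ℝ} (hL : 0 < L) :
    Ioc 0 L ⊆ ⋃ j : ℕ, Ioc (L / 2 ^ (j + 1)) (L / 2 ^ j) := by
  rintro x ⟨hx0, hxL⟩
  have hex : ∃ j : ℕ, L / 2 ^ (j + 1) < x := by
    obtain ⟨j, hj⟩ := pow_unbounded_of_one_lt (L / x) (one_lt_two (α := ℝ))
    refine ⟨j, ?_⟩
    rw [div_lt_iff₀ (by positivity)]
    have h1 : L < x * 2 ^ j := by rw [div_lt_iff₀ hx0] at hj; linarith
    have h2 : x * 2 ^ j ≤ x * 2 ^ (j + 1) :=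
      mul_le_mul_of_nonneg_left (pow_le_pow_right₀ (by norm_num) (Nat.le_succ j)) hx0.le
    linarith
  classical
  refine mem_iUnion.2 ⟨Nat.find hex, Nat.find_spec hex, ?_⟩
  rcases Nat.eq_zero_or_pos (Nat.find hex) with h0 | h0
  · rw [h0]; simpa using hxL
  · obtain ⟨j', hj'⟩ : ∃ j', Nat.find hex = j' + 1 :=
      ⟨Nat.find hex - 1, (Nat.succ_pred_eq_of_pos h0).symm⟩
    rw [hj']
    have := Nat.find_min hex (m := j') (by omega)
    exact le_of_not_gt this

/-- Fubini: integral of ball measures. -/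
lemma lintegral_measure_ball' {n : ℕ} (hn : 0 < n) (ω : Measure (EuclideanSpace ℝ (Fin n)))
    [SFinite ω] {r : ℝ} (hr : 0 ≤ r) :
    ∫⁻ x, ω (Metric.ball x r) =
      ENNReal.ofReal (r ^ n) * volume (Metric.ball (0 : EuclideanSpace ℝ (Fin n)) 1) * ω univ := by
  haveI : Nonempty (Fin n) := ⟨⟨0, hn⟩⟩
  haveI : Nontrivial (EuclideanSpace ℝ (Fin n)) := inferInstance
  set S : Set (EuclideanSpace ℝ (Fin n) × EuclideanSpace ℝ (Fin n)) :=
    {q | dist q.2 q.1 < r} with hS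
  have hSm : MeasurableSet S :=
    measurableSet_lt (measurable_dist.comp measurable_swap) measurable_const
  have h1 : ∀ x, Metric.ball x r = Prod.mk x ⁻¹' S := by
    intro x; ext y; simp [hS, Metric.mem_ball]
  calc ∫⁻ x, ω (Metric.ball x r) = ∫⁻ x, ω (Prod.mk x ⁻¹' S) := by simp_rw [h1]
    _ = (volume.prod ω) S := (Measure.prod_apply hSm).symm
    _ = ∫⁻ y, volume ((fun x => (x, y)) ⁻¹' S) ∂ω := Measure.prod_apply_symm hSm
    _ = ∫⁻ y, volume (Metric.ball y r) ∂ω := by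
        refine lintegral_congr fun y => ?_
        congr 1
        ext x
        simp [hS, Metric.mem_ball, dist_comm]
    _ = ∫⁻ _, ENNReal.ofReal (r ^ n) *
          volume (Metric.ball (0 : EuclideanSpace ℝ (Fin n)) 1) ∂ω := by
        refine lintegral_congr fun y => ?_
        rw [Measure.addHaar_ball volume y hr, finrank_euclideanSpace_fin]
    _ = _ := by rw [lintegral_const]

/-- measurability of `x ↦ ω (ball x r)`. -/
lemma measurable_measure_ball' {n : ℕ} (ω : Measure (EuclideanSpace ℝ (Fin n))) [SFinite ω]
    (r : ℝ) : Measurable fun x => ω (Metric.ball x r) := by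
  have hSm : MeasurableSet {q : EuclideanSpace ℝ (Fin n) × EuclideanSpace ℝ (Fin n) |
      dist q.2 q.1 < r} :=
    measurableSet_lt (measurable_dist.comp measurable_swap) measurable_const
  have h := measurable_measure_prodMk_left (ν := ω) hSm
  convert h using 2 with x
  rfl

/-- volume of a dyadic cube. -/
lemma volume_dyadicCube {n : ℕ} (R : DyadicCube n) :
    volume R.toSet = ENNReal.ofReal (((2 : ℝ) ^ (-R.k)) ^ n) := by
  have hmp := EuclideanSpace.volume_preserving_symm_measurableEquiv_toLp (Fin n)
  have hset : R.toSet = (MeasurableEquiv.toLp 2 (Fin n → ℝ)).symm ⁻¹'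
      (univ.pi fun i => Ico ((R.m i : ℝ) * 2 ^ (-R.k)) (((R.m i : ℝ) + 1) * 2 ^ (-R.k))) := by
    ext x
    simp only [DyadicCube.toSet, mem_setOf_eq, mem_preimage, mem_pi, mem_univ, forall_true_left,
      mem_Ico]
    rfl
  rw [hset,
    hmp.measure_preimage ((MeasurableSet.univ_pi fun i => measurableSet_Ico).nullMeasurableSet),
    volume_pi_pi]
  have e1 : ∀ i : Fin n,
      ((R.m i : ℝ) + 1) * 2 ^ (-R.k) - (R.m i : ℝ) * 2 ^ (-R.k) = 2 ^ (-R.k) := fun i => by ring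
  simp_rw [Real.volume_Ico, e1, Finset.prod_const, Finset.card_univ, Fintype.card_fin]
  rw [← ENNReal.ofReal_pow (by positivity)]

/-- Local average estimate ([SV2, Lemma 3.1]): with `s = min(1, p-1)`, for every dyadic cube `R`
and every locally finite measure `ω` supported in `R`,
`(1/|R|) ∫_R (W_{α,p}ω)^s dx ≤ C(n,α,p) (ω(R)/|R|^{1-αp/n})^{s/(p-1)}`. -/
theorem wolff_local_average_estimate (n : ℕ) (α p : ℝ) (hp : 1 < p)
    (hα : 0 < α) (hαn : α < (n : ℝ) / p) :
    ∃ C : ℝ≥0∞, C ≠ ⊤ ∧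
      ∀ (R : DyadicCube n) (ω : Measure (EuclideanSpace ℝ (Fin n)))
        [IsLocallyFiniteMeasure ω], ω R.toSetᶜ = 0 →
        (volume R.toSet)⁻¹ *
            ∫⁻ x in R.toSet, (wolffPotential n α p ω x) ^ (min 1 (p - 1))
          ≤ C * (ω R.toSet / (volume R.toSet) ^ (1 - α * p / n)) ^ (min 1 (p - 1) / (p - 1)) := by
  have hp1 : (0:ℝ) < p - 1 := by linarith
  have hp0 : (0:ℝ) < p := by linarith
  set q : ℝ := 1 / (p - 1) with hq_def
  have hq : 0 < q := by rw [hq_def]; positivity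
  have hn : 0 < n := by
    rcases Nat.eq_zero_or_pos n with h | h
    · exfalso
      rw [h] at hαn
      norm_num at hαn
      linarith
    · exact h
  have hnR : (0:ℝ) < n := Nat.cast_pos.2 hn
  set β : ℝ := (n:ℝ) - α * p with hβ_def
  have hβ : 0 < β := by
    have := (lt_div_iff₀ hp0).mp hαn
    rw [hβ_def]; linarith
  have hαp : 0 < α * p := by positivity
  have hβq : 0 < β * q := by positivity
  set s : ℝ := min 1 (p - 1) with hs_def
  have hs0 : 0 < s := lt_min one_pos hp1
  have hs1 : s ≤ 1 := min_le_left _ _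
  have hsq0 : 0 < s * q := by positivity
  have hsq1 : s * q ≤ 1 := by
    have h1 : s ≤ p - 1 := min_le_right _ _
    calc s * q ≤ (p - 1) * q := mul_le_mul_of_nonneg_right h1 hq.le
      _ = 1 := by rw [hq_def]; field_simp
  set κ : ℝ≥0∞ := volume (Metric.ball (0 : EuclideanSpace ℝ (Fin n)) 1) with hκ_def
  have hκ : κ ≠ ⊤ := measure_ball_lt_top.ne
  set c1 : ℝ≥0∞ := ENNReal.ofReal ((2:ℝ) ^ (β * q)) with hc1_def
  have hc1 : c1 ≠ ⊤ := ENNReal.ofReal_ne_top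
  -- core estimate
  have hcore : ∃ D : ℝ≥0∞, D ≠ ⊤ ∧ ∀ (R : DyadicCube n)
      (ω : Measure (EuclideanSpace ℝ (Fin n))), ∀ _ : SigmaFinite ω,
      ∫⁻ x in R.toSet, (∑' j : ℕ, ω (Metric.ball x ((2:ℝ) ^ (-R.k) / 2 ^ j)) ^ q *
          ENNReal.ofReal (((2:ℝ) ^ (-R.k) / 2 ^ j) ^ (-(β * q)))) ^ s
        ≤ D * (ω univ) ^ (s * q) * ENNReal.ofReal (((2:ℝ) ^ (-R.k)) ^ (α * p * (s * q))) *
            (volume R.toSet) ^ (1 - s * q) := by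
    rcases le_or_gt p 2 with hp2 | hp2
    · -- p ≤ 2, s = p - 1
      have hs_eq : s = p - 1 := min_eq_right (by linarith)
      have hqs : q * s = 1 := by rw [hs_eq, hq_def]; field_simp
      have hsqe : s * q = 1 := by rw [mul_comm]; exact hqs
      refine ⟨κ * (1 - ENNReal.ofReal (((2:ℝ) ^ (α * p))⁻¹))⁻¹,
        ENNReal.mul_ne_top hκ (geo_ne_top hαp), ?_⟩
      intro R ω hσ
      set L : ℝ := (2:ℝ) ^ (-R.k) with hL_def
      have hL : 0 < L := by rw [hL_def]; positivity
      have hrj : ∀ j : ℕ, (0:ℝ) < L / 2 ^ j := fun j => by positivity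
      have hpow_eq : ∀ (j : ℕ) (x : EuclideanSpace ℝ (Fin n)),
          (ω (Metric.ball x (L / 2 ^ j)) ^ q *
            ENNReal.ofReal ((L / 2 ^ j) ^ (-(β * q)))) ^ s
          = ω (Metric.ball x (L / 2 ^ j)) * ENNReal.ofReal ((L / 2 ^ j) ^ (-β)) := by
        intro j x
        rw [ENNReal.mul_rpow_of_nonneg _ _ hs0.le, ← ENNReal.rpow_mul, hqs, ENNReal.rpow_one,
          ofReal_rpow_rpow (hrj j),
          show -(β * q) * s = -β by
            calc -(β * q) * s = -(β * (q * s)) := by ring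
              _ = -β := by rw [hqs, mul_one]]
      calc ∫⁻ x in R.toSet, (∑' j : ℕ, ω (Metric.ball x (L / 2 ^ j)) ^ q *
              ENNReal.ofReal ((L / 2 ^ j) ^ (-(β * q)))) ^ s
          ≤ ∫⁻ x in R.toSet, ∑' j : ℕ, (ω (Metric.ball x (L / 2 ^ j)) ^ q *
              ENNReal.ofReal ((L / 2 ^ j) ^ (-(β * q)))) ^ s :=
            lintegral_mono fun x => tsum_rpow_le' hs0 hs1
        _ = ∫⁻ x in R.toSet, ∑' j : ℕ, ω (Metric.ball x (L / 2 ^ j)) *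
              ENNReal.ofReal ((L / 2 ^ j) ^ (-β)) :=
            lintegral_congr fun x => tsum_congr fun j => hpow_eq j x
        _ = ∑' j : ℕ, ∫⁻ x in R.toSet, ω (Metric.ball x (L / 2 ^ j)) *
              ENNReal.ofReal ((L / 2 ^ j) ^ (-β)) :=
            lintegral_tsum fun j => ((measurable_measure_ball' ω _).mul_const _).aemeasurable
        _ ≤ ∑' j : ℕ, ENNReal.ofReal ((L / 2 ^ j) ^ ((n:ℝ))) * κ * ω univ *
              ENNReal.ofReal ((L / 2 ^ j) ^ (-β)) := by
            refine ENNReal.tsum_le_tsum fun j => ?_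
            rw [lintegral_mul_const _ (measurable_measure_ball' ω _)]
            refine mul_le_mul_left ?_ _
            refine le_trans (setLIntegral_le_lintegral _ _) ?_
            rw [lintegral_measure_ball' hn ω (hrj j).le, Real.rpow_natCast]
        _ = κ * ω univ * ∑' j : ℕ, ENNReal.ofReal ((L / 2 ^ j) ^ (α * p)) := by
            rw [← ENNReal.tsum_mul_left]
            refine tsum_congr fun j => ?_
            calc ENNReal.ofReal ((L / 2 ^ j) ^ ((n:ℝ))) * κ * ω univ *
                  ENNReal.ofReal ((L / 2 ^ j) ^ (-β))
                = κ * ω univ * (ENNReal.ofReal ((L / 2 ^ j) ^ ((n:ℝ))) *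
                    ENNReal.ofReal ((L / 2 ^ j) ^ (-β))) := by ring
              _ = κ * ω univ * ENNReal.ofReal ((L / 2 ^ j) ^ (α * p)) := by
                  rw [ofReal_rpow_mul_ofReal_rpow (hrj j)]
                  congr 2
                  rw [hβ_def]; ring
        _ = κ * ω univ * (ENNReal.ofReal (L ^ (α * p)) *
              (1 - ENNReal.ofReal (((2:ℝ) ^ (α * p))⁻¹))⁻¹) := by
            rw [geo_sum hL hαp]
        _ = κ * (1 - ENNReal.ofReal (((2:ℝ) ^ (α * p))⁻¹))⁻¹ * (ω univ) ^ (s * q) *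
              ENNReal.ofReal (L ^ (α * p * (s * q))) * (volume R.toSet) ^ (1 - s * q) := by
            rw [hsqe, ENNReal.rpow_one, mul_one, sub_self, ENNReal.rpow_zero, mul_one]
            ring
    · -- p > 2, s = 1
      have hs_eq : s = 1 := min_eq_left (by linarith)
      have hq1 : q < 1 := by rw [hq_def, div_lt_one hp1]; linarith
      have hsqe : s * q = q := by rw [hs_eq, one_mul]
      have hαpq : 0 < α * p * q := by positivity
      refine ⟨κ ^ q * (1 - ENNReal.ofReal (((2:ℝ) ^ (α * p * q))⁻¹))⁻¹,
        ENNReal.mul_ne_top (ENNReal.rpow_ne_top_of_nonneg hq.le hκ) (geo_ne_top hαpq), ?_⟩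
      intro R ω hσ
      set L : ℝ := (2:ℝ) ^ (-R.k) with hL_def
      have hL : 0 < L := by rw [hL_def]; positivity
      have hrj : ∀ j : ℕ, (0:ℝ) < L / 2 ^ j := fun j => by positivity
      calc ∫⁻ x in R.toSet, (∑' j : ℕ, ω (Metric.ball x (L / 2 ^ j)) ^ q *
              ENNReal.ofReal ((L / 2 ^ j) ^ (-(β * q)))) ^ s
          = ∫⁻ x in R.toSet, ∑' j : ℕ, ω (Metric.ball x (L / 2 ^ j)) ^ q *
              ENNReal.ofReal ((L / 2 ^ j) ^ (-(β * q))) := by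
            simp only [hs_eq, ENNReal.rpow_one]
        _ = ∑' j : ℕ, ∫⁻ x in R.toSet, ω (Metric.ball x (L / 2 ^ j)) ^ q *
              ENNReal.ofReal ((L / 2 ^ j) ^ (-(β * q))) :=
            lintegral_tsum fun j =>
              (((measurable_measure_ball' ω _).pow_const q).mul_const _).aemeasurable
        _ ≤ ∑' j : ℕ, (ENNReal.ofReal ((L / 2 ^ j) ^ ((n:ℝ))) * κ * ω univ) ^ q *
              (volume R.toSet) ^ (1 - q) * ENNReal.ofReal ((L / 2 ^ j) ^ (-(β * q))) := by
            refine ENNReal.tsum_le_tsum fun j => ?_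
            rw [lintegral_mul_const _ ((measurable_measure_ball' ω _).pow_const q)]
            refine mul_le_mul_left ?_ _
            calc ∫⁻ x in R.toSet, ω (Metric.ball x (L / 2 ^ j)) ^ q
                ≤ (∫⁻ x in R.toSet, ω (Metric.ball x (L / 2 ^ j))) ^ q *
                    ((volume.restrict R.toSet) univ) ^ (1 - q) :=
                  lintegral_rpow_le_mul _ (measurable_measure_ball' ω _) hq hq1
              _ ≤ (ENNReal.ofReal ((L / 2 ^ j) ^ ((n:ℝ))) * κ * ω univ) ^ q *
                    (volume R.toSet) ^ (1 - q) := by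
                  rw [Measure.restrict_apply_univ]
                  refine mul_le_mul_left (ENNReal.rpow_le_rpow ?_ hq.le) _
                  refine le_trans (setLIntegral_le_lintegral _ _) ?_
                  rw [lintegral_measure_ball' hn ω (hrj j).le, Real.rpow_natCast]
        _ = κ ^ q * (ω univ) ^ q * (volume R.toSet) ^ (1 - q) *
              ∑' j : ℕ, ENNReal.ofReal ((L / 2 ^ j) ^ (α * p * q)) := by
            rw [← ENNReal.tsum_mul_left]
            refine tsum_congr fun j => ?_
            calc (ENNReal.ofReal ((L / 2 ^ j) ^ ((n:ℝ))) * κ * ω univ) ^ q *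
                  (volume R.toSet) ^ (1 - q) * ENNReal.ofReal ((L / 2 ^ j) ^ (-(β * q)))
                = ENNReal.ofReal ((L / 2 ^ j) ^ ((n:ℝ))) ^ q * κ ^ q * (ω univ) ^ q *
                    (volume R.toSet) ^ (1 - q) * ENNReal.ofReal ((L / 2 ^ j) ^ (-(β * q))) := by
                  rw [ENNReal.mul_rpow_of_nonneg _ _ hq.le, ENNReal.mul_rpow_of_nonneg _ _ hq.le]
              _ = κ ^ q * (ω univ) ^ q * (volume R.toSet) ^ (1 - q) *
                    (ENNReal.ofReal ((L / 2 ^ j) ^ ((n:ℝ) * q)) *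
                      ENNReal.ofReal ((L / 2 ^ j) ^ (-(β * q)))) := by
                  rw [ofReal_rpow_rpow (hrj j)]; ring
              _ = κ ^ q * (ω univ) ^ q * (volume R.toSet) ^ (1 - q) *
                    ENNReal.ofReal ((L / 2 ^ j) ^ (α * p * q)) := by
                  rw [ofReal_rpow_mul_ofReal_rpow (hrj j)]
                  congr 2
                  rw [hβ_def]; ring
        _ = κ ^ q * (ω univ) ^ q * (volume R.toSet) ^ (1 - q) *
              (ENNReal.ofReal (L ^ (α * p * q)) *
                (1 - ENNReal.ofReal (((2:ℝ) ^ (α * p * q))⁻¹))⁻¹) := by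
            rw [geo_sum hL hαpq]
        _ = κ ^ q * (1 - ENNReal.ofReal (((2:ℝ) ^ (α * p * q))⁻¹))⁻¹ * (ω univ) ^ (s * q) *
              ENNReal.ofReal (L ^ (α * p * (s * q))) * (volume R.toSet) ^ (1 - s * q) := by
            rw [hsqe]
            ring
  obtain ⟨D, hD, hcore⟩ := hcore
  refine ⟨c1 ^ s * D + ENNReal.ofReal (((β * q) ^ s)⁻¹), ?_, ?_⟩
  · exact ENNReal.add_ne_top.2
      ⟨ENNReal.mul_ne_top (ENNReal.rpow_ne_top_of_nonneg hs0.le hc1) hD, ENNReal.ofReal_ne_top⟩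
  intro R ω inst hω
  haveI : SigmaFinite ω := inferInstance
  set L : ℝ := (2:ℝ) ^ (-R.k) with hL_def
  have hL : 0 < L := by rw [hL_def]; positivity
  set M : ℝ≥0∞ := ω univ with hM_def
  have hMR : ω R.toSet = M := by
    refine le_antisymm (measure_mono (subset_univ _)) ?_
    have h := measure_union_le (μ := ω) R.toSet R.toSetᶜ
    rwa [union_compl_self, hω, add_zero] at h
  have hvol : volume R.toSet = ENNReal.ofReal (L ^ ((n:ℝ))) := by
    rw [volume_dyadicCube, Real.rpow_natCast]
  have hvol0 : volume R.toSet ≠ 0 := by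
    rw [hvol]; exact (ENNReal.ofReal_pos.2 (Real.rpow_pos_of_pos hL _)).ne'
  have hvolT : volume R.toSet ≠ ⊤ := by rw [hvol]; exact ENNReal.ofReal_ne_top
  set G : ℕ → EuclideanSpace ℝ (Fin n) → ℝ≥0∞ := fun j x =>
    ω (Metric.ball x (L / 2 ^ j)) ^ q * ENNReal.ofReal ((L / 2 ^ j) ^ (-(β * q))) with hG_def
  have hrj : ∀ j : ℕ, (0:ℝ) < L / 2 ^ j := fun j => by positivity
  set T : ℝ≥0∞ := M ^ q * ENNReal.ofReal (L ^ (-(β * q)) / (β * q)) with hT_def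
  have Fnorm : ∀ (x : EuclideanSpace ℝ (Fin n)) (ρ : ℝ), 0 < ρ →
      (ω (Metric.ball x ρ) / ENNReal.ofReal (ρ ^ β)) ^ q * ENNReal.ofReal (1 / ρ)
        = ω (Metric.ball x ρ) ^ q * ENNReal.ofReal (ρ ^ (-(β * q) + -1)) := by
    intro x ρ hρ
    rw [div_eq_mul_inv, ofReal_rpow_inv' hρ, ENNReal.mul_rpow_of_nonneg _ _ hq.le,
      ofReal_rpow_rpow hρ, one_div, ← Real.rpow_neg_one ρ, mul_assoc,
      ofReal_rpow_mul_ofReal_rpow hρ]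
    congr 2
    ring
  have tailb : ∀ x, (∫⁻ ρ in Ioi L,
      (ω (Metric.ball x ρ) / ENNReal.ofReal (ρ ^ β)) ^ q * ENNReal.ofReal (1 / ρ)) ≤ T := by
    intro x
    have h1 : (∫⁻ ρ in Ioi L, (ω (Metric.ball x ρ) / ENNReal.ofReal (ρ ^ β)) ^ q *
        ENNReal.ofReal (1 / ρ))
        ≤ ∫⁻ ρ in Ioi L, M ^ q * ENNReal.ofReal (ρ ^ (-(β * q) + -1)) := by
      refine lintegral_mono_ae ?_
      filter_upwards [ae_restrict_mem measurableSet_Ioi] with ρ hρ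
      rw [Fnorm x ρ (hL.trans hρ)]
      exact mul_le_mul_left (ENNReal.rpow_le_rpow (measure_mono (subset_univ _)) hq.le) _
    refine h1.trans ?_
    have hme : Measurable fun ρ : ℝ => ENNReal.ofReal (ρ ^ (-(β * q) + -1)) :=
      (measurable_id.pow_const _).ennreal_ofReal
    rw [lintegral_const_mul _ hme,
      lintegral_Ioi_rpow_ofReal (by linarith : -(β * q) + -1 < -1) hL, hT_def]
    refine mul_le_mul_right (le_of_eq ?_) _
    congr 1
    rw [show -(β * q) + -1 + 1 = -(β * q) by ring, neg_div_neg_eq]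
  have localb : ∀ x, (∫⁻ ρ in Ioc 0 L,
      (ω (Metric.ball x ρ) / ENNReal.ofReal (ρ ^ β)) ^ q * ENNReal.ofReal (1 / ρ))
        ≤ c1 * ∑' j, G j x := by
    intro x
    have perj : ∀ j : ℕ, (∫⁻ ρ in Ioc (L / 2 ^ (j + 1)) (L / 2 ^ j),
        (ω (Metric.ball x ρ) / ENNReal.ofReal (ρ ^ β)) ^ q * ENNReal.ofReal (1 / ρ))
          ≤ c1 * G j x := by
      intro j
      have hr2 : (0:ℝ) < L / 2 ^ j / 2 := by positivity
      have hsplit : L / 2 ^ (j + 1) = L / 2 ^ j / 2 := by rw [pow_succ]; ring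
      have hstep : ∀ᵐ ρ ∂(volume.restrict (Ioc (L / 2 ^ (j + 1)) (L / 2 ^ j))),
          (ω (Metric.ball x ρ) / ENNReal.ofReal (ρ ^ β)) ^ q * ENNReal.ofReal (1 / ρ)
            ≤ ω (Metric.ball x (L / 2 ^ j)) ^ q *
                ENNReal.ofReal ((L / 2 ^ j / 2) ^ (-(β * q) + -1)) := by
        filter_upwards [ae_restrict_mem measurableSet_Ioc] with ρ hρ
        have hρ0 : 0 < ρ := lt_of_le_of_lt (by positivity : (0:ℝ) ≤ L / 2 ^ (j + 1)) hρ.1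
        rw [Fnorm x ρ hρ0]
        refine mul_le_mul'
          (ENNReal.rpow_le_rpow (measure_mono (Metric.ball_subset_ball hρ.2)) hq.le) ?_
        refine ENNReal.ofReal_le_ofReal ?_
        refine Real.rpow_le_rpow_of_nonpos hr2 ?_ (by linarith : -(β * q) + -1 ≤ 0)
        rw [← hsplit]; exact hρ.1.le
      have e2 : (L / 2 ^ j / 2) ^ (-(β * q) + -1) * (L / 2 ^ j / 2)
          = (L / 2 ^ j / 2) ^ (-(β * q)) := by
        have h := Real.rpow_add hr2 (-(β * q) + -1) 1
        rw [Real.rpow_one] at h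
        rw [← h, show -(β * q) + -1 + 1 = -(β * q) by ring]
      have e3 : (L / 2 ^ j / 2) ^ (-(β * q)) = (L / 2 ^ j) ^ (-(β * q)) * (2:ℝ) ^ (β * q) := by
        rw [Real.div_rpow (hrj j).le (by norm_num : (0:ℝ) ≤ 2),
          Real.rpow_neg (by norm_num : (0:ℝ) ≤ 2) (β * q), div_eq_mul_inv, inv_inv]
      have hIoc : volume (Ioc (L / 2 ^ (j + 1)) (L / 2 ^ j)) = ENNReal.ofReal (L / 2 ^ j / 2) := by
        rw [Real.volume_Ioc]
        congr 1
        rw [hsplit]; ring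
      calc (∫⁻ ρ in Ioc (L / 2 ^ (j + 1)) (L / 2 ^ j),
            (ω (Metric.ball x ρ) / ENNReal.ofReal (ρ ^ β)) ^ q * ENNReal.ofReal (1 / ρ))
          ≤ ∫⁻ _ in Ioc (L / 2 ^ (j + 1)) (L / 2 ^ j),
              ω (Metric.ball x (L / 2 ^ j)) ^ q *
                ENNReal.ofReal ((L / 2 ^ j / 2) ^ (-(β * q) + -1)) := lintegral_mono_ae hstep
        _ = ω (Metric.ball x (L / 2 ^ j)) ^ q *
              ENNReal.ofReal ((L / 2 ^ j / 2) ^ (-(β * q) + -1)) *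
              volume (Ioc (L / 2 ^ (j + 1)) (L / 2 ^ j)) := setLIntegral_const _ _
        _ = c1 * G j x := by
            rw [hIoc, mul_assoc, ← ENNReal.ofReal_mul (Real.rpow_nonneg hr2.le _), e2, e3,
              ENNReal.ofReal_mul (Real.rpow_nonneg (hrj j).le _), hG_def, hc1_def]
            ring
    calc (∫⁻ ρ in Ioc 0 L,
          (ω (Metric.ball x ρ) / ENNReal.ofReal (ρ ^ β)) ^ q * ENNReal.ofReal (1 / ρ))
        ≤ ∫⁻ ρ in ⋃ j : ℕ, Ioc (L / 2 ^ (j + 1)) (L / 2 ^ j),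
            (ω (Metric.ball x ρ) / ENNReal.ofReal (ρ ^ β)) ^ q * ENNReal.ofReal (1 / ρ) :=
          lintegral_mono_set (Ioc_subset_iUnion_dyadic hL)
      _ ≤ ∑' j : ℕ, ∫⁻ ρ in Ioc (L / 2 ^ (j + 1)) (L / 2 ^ j),
            (ω (Metric.ball x ρ) / ENNReal.ofReal (ρ ^ β)) ^ q * ENNReal.ofReal (1 / ρ) :=
          lintegral_iUnion_le _ _
      _ ≤ ∑' j : ℕ, c1 * G j x := ENNReal.tsum_le_tsum perj
      _ = c1 * ∑' j, G j x := ENNReal.tsum_mul_left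
  have pt : ∀ x, wolffPotential n α p ω x ≤ c1 * ∑' j, G j x + T := by
    intro x
    have hw : wolffPotential n α p ω x = ∫⁻ ρ in Ioi (0:ℝ),
        (ω (Metric.ball x ρ) / ENNReal.ofReal (ρ ^ β)) ^ q * ENNReal.ofReal (1 / ρ) := rfl
    rw [hw, ← Ioc_union_Ioi_eq_Ioi hL.le]
    exact le_trans (lintegral_union_le _ _ _) (add_le_add (localb x) (tailb x))
  have hGm : ∀ j, Measurable (G j) := fun j =>
    ((measurable_measure_ball' ω _).pow_const q).mul_const _
  have hSm : Measurable fun x => (∑' j, G j x) ^ s :=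
    (Measurable.ennreal_tsum hGm).pow_const s
  have main1 : (∫⁻ x in R.toSet, wolffPotential n α p ω x ^ s)
      ≤ c1 ^ s * (∫⁻ x in R.toSet, (∑' j, G j x) ^ s) + T ^ s * volume R.toSet := by
    calc (∫⁻ x in R.toSet, wolffPotential n α p ω x ^ s)
        ≤ ∫⁻ x in R.toSet, (c1 ^ s * (∑' j, G j x) ^ s + T ^ s) := by
          refine lintegral_mono fun x => ?_
          calc wolffPotential n α p ω x ^ s ≤ (c1 * ∑' j, G j x + T) ^ s :=
                ENNReal.rpow_le_rpow (pt x) hs0.le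
            _ ≤ (c1 * ∑' j, G j x) ^ s + T ^ s :=
                ENNReal.rpow_add_le_add_rpow _ _ hs0.le hs1
            _ = c1 ^ s * (∑' j, G j x) ^ s + T ^ s := by
                rw [ENNReal.mul_rpow_of_nonneg _ _ hs0.le]
      _ = _ := by
          rw [lintegral_add_right _ measurable_const, setLIntegral_const,
            lintegral_const_mul _ hSm]
  have hcoreR : ∫⁻ x in R.toSet, (∑' j, G j x) ^ s ≤ D * M ^ (s * q) *
      ENNReal.ofReal (L ^ (α * p * (s * q))) * (volume R.toSet) ^ (1 - s * q) := by
    have h := hcore R ω inferInstance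
    rw [← hL_def, ← hM_def] at h
    exact h
  have hsdiv : s / (p - 1) = s * q := by rw [hq_def]; ring
  have hX : (volume R.toSet) ^ (1 - α * p / (n:ℝ)) = ENNReal.ofReal (L ^ β) := by
    rw [hvol, ENNReal.ofReal_rpow_of_pos (Real.rpow_pos_of_pos hL _), ← Real.rpow_mul hL.le]
    congr 1
    rw [hβ_def]
    field_simp
  have hRHS : (M / ENNReal.ofReal (L ^ β)) ^ (s * q)
      = M ^ (s * q) * ENNReal.ofReal (L ^ (-(β * (s * q)))) := by
    rw [ENNReal.div_rpow_of_nonneg _ _ hsq0.le, ofReal_rpow_rpow hL, div_eq_mul_inv,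
      ofReal_rpow_inv' hL]
  have hv2 : (volume R.toSet)⁻¹ * (volume R.toSet) ^ (1 - s * q)
      = ENNReal.ofReal (L ^ (-((n:ℝ) * (s * q)))) := by
    rw [← ENNReal.rpow_neg_one (volume R.toSet), ← ENNReal.rpow_add _ _ hvol0 hvolT, hvol,
      ofReal_rpow_rpow hL]
    congr 2
    ring
  have hcomb : ENNReal.ofReal (L ^ (α * p * (s * q))) * ENNReal.ofReal (L ^ (-((n:ℝ) * (s * q))))
      = ENNReal.ofReal (L ^ (-(β * (s * q)))) := by
    rw [ofReal_rpow_mul_ofReal_rpow hL]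
    congr 2
    rw [hβ_def]; ring
  have hTs : T ^ s = ENNReal.ofReal (((β * q) ^ s)⁻¹) *
      (M ^ (s * q) * ENNReal.ofReal (L ^ (-(β * (s * q))))) := by
    rw [hT_def, ENNReal.mul_rpow_of_nonneg _ _ hs0.le, ← ENNReal.rpow_mul,
      ENNReal.ofReal_rpow_of_pos (by positivity : 0 < L ^ (-(β * q)) / (β * q)),
      Real.div_rpow (Real.rpow_nonneg hL.le _) hβq.le, ← Real.rpow_mul hL.le,
      div_eq_mul_inv, ENNReal.ofReal_mul (Real.rpow_nonneg hL.le _),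
      show -(β * q) * s = -(β * (s * q)) by ring, show q * s = s * q from mul_comm q s]
    ring
  rw [hsdiv, hMR, hX, hRHS]
  calc (volume R.toSet)⁻¹ * ∫⁻ x in R.toSet, wolffPotential n α p ω x ^ s
      ≤ (volume R.toSet)⁻¹ *
          (c1 ^ s * (∫⁻ x in R.toSet, (∑' j, G j x) ^ s) + T ^ s * volume R.toSet) :=
        mul_le_mul_right main1 _
    _ ≤ (volume R.toSet)⁻¹ * (c1 ^ s * (D * M ^ (s * q) *
          ENNReal.ofReal (L ^ (α * p * (s * q))) * (volume R.toSet) ^ (1 - s * q)) +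
          T ^ s * volume R.toSet) :=
        mul_le_mul_right (add_le_add_left (mul_le_mul_right hcoreR _) _) _
    _ = c1 ^ s * D * M ^ (s * q) * ENNReal.ofReal (L ^ (α * p * (s * q))) *
          ((volume R.toSet)⁻¹ * (volume R.toSet) ^ (1 - s * q)) +
          T ^ s * ((volume R.toSet)⁻¹ * volume R.toSet) := by ring
    _ = c1 ^ s * D * M ^ (s * q) * (ENNReal.ofReal (L ^ (α * p * (s * q))) *
          ENNReal.ofReal (L ^ (-((n:ℝ) * (s * q))))) + T ^ s := by
        rw [hv2, ENNReal.inv_mul_cancel hvol0 hvolT, mul_one, mul_assoc]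
    _ = c1 ^ s * D * (M ^ (s * q) * ENNReal.ofReal (L ^ (-(β * (s * q))))) +
          ENNReal.ofReal (((β * q) ^ s)⁻¹) *
            (M ^ (s * q) * ENNReal.ofReal (L ^ (-(β * (s * q))))) := by
        rw [hcomb, hTs]
        ring
    _ = (c1 ^ s * D + ENNReal.ofReal (((β * q) ^ s)⁻¹)) *
          (M ^ (s * q) * ENNReal.ofReal (L ^ (-(β * (s * q))))) := by ring
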